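/- arXiv:1605.08487 — 5 statements merged into one kernel-verified Lean document; each statement's English description precedes it below -/
import Mathlib

section
/- Let x : Fin N → ℝ with x[0] ≠ 0 and x[N-1] ≠ 0, and let P_r(z) = Σ_{n=0}^{2N-2} r[n-(N-1)] z^n be the associated polynomial of the autocorrelation r of x. If γ ∈ ℂ is a root of P_r, then γ ≠ 0 and 1/conj(γ) is also a root of P_r (the roots occur in pairs reflected about the unit circle). -/
open Finset in
lemma autocorr_conv_identity (N : ℕ) (hN : 1 ≤ N) (x : ℕ → ℝ)
    (hsupp : ∀ i, N ≤ i → x i = 0) (w : ℂ) :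
    (∑ n ∈ Finset.range (2 * N - 1),
        ((∑ i ∈ Finset.range N, x i * x (i + ((n : ℤ) - (N - 1 : ℕ)).natAbs) : ℝ) : ℂ) * w ^ n)
      = (∑ i ∈ Finset.range N, (x i : ℂ) * w ^ i) *
        (∑ j ∈ Finset.range N, (x j : ℂ) * w ^ (N - 1 - j)) := by
  classical
  rw [Finset.sum_mul_sum]
  have lhs_eq : (∑ n ∈ Finset.range (2 * N - 1),
      ((∑ i ∈ Finset.range N, x i * x (i + ((n : ℤ) - (N - 1 : ℕ)).natAbs) : ℝ) : ℂ) * w ^ n)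
      = ∑ p ∈ (Finset.range (2 * N - 1)) ×ˢ (Finset.range N),
          (x p.2 : ℂ) * ((x (p.2 + ((p.1 : ℤ) - (N - 1 : ℕ)).natAbs) : ℝ) : ℂ) * w ^ p.1 := by
    rw [Finset.sum_product]
    refine Finset.sum_congr rfl fun n _ => ?_
    push_cast
    rw [Finset.sum_mul]
  have rhs_eq : (∑ i ∈ Finset.range N, ∑ j ∈ Finset.range N,
        (x i : ℂ) * w ^ i * ((x j : ℂ) * w ^ (N - 1 - j)))
      = ∑ q ∈ (Finset.range N) ×ˢ (Finset.range N),
          (x q.1 : ℂ) * w ^ q.1 * ((x q.2 : ℂ) * w ^ (N - 1 - q.2)) := by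
    rw [Finset.sum_product]
  rw [lhs_eq, rhs_eq]
  have hval1 : ∀ n i a : ℕ, N - 1 ≤ n → i < N → a = i + (n - (N - 1)) →
      (x i : ℂ) * ((x (i + ((n : ℤ) - (N - 1 : ℕ)).natAbs) : ℝ) : ℂ) * w ^ n
        = (x a : ℂ) * w ^ a * ((x i : ℂ) * w ^ (N - 1 - i)) := by
    intro n i a hn hi ha
    have hm' : ((n : ℤ) - (N - 1 : ℕ)).natAbs = n - (N - 1) := by omega
    rw [hm', show i + (n - (N - 1)) = a from ha.symm,
        show w ^ n = w ^ a * w ^ (N - 1 - i) from by rw [← pow_add]; congr 1; omega]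
    ring
  have hval2 : ∀ n i b : ℕ, n < N - 1 → i < N → b = i + ((N - 1) - n) →
      (x i : ℂ) * ((x (i + ((n : ℤ) - (N - 1 : ℕ)).natAbs) : ℝ) : ℂ) * w ^ n
        = (x i : ℂ) * w ^ i * ((x b : ℂ) * w ^ (N - 1 - b)) := by
    intro n i b hn hi hb
    have hm' : ((n : ℤ) - (N - 1 : ℕ)).natAbs = (N - 1) - n := by omega
    rw [hm', show i + ((N - 1) - n) = b from hb.symm]
    by_cases hle : i ≤ n
    · rw [show w ^ n = w ^ i * w ^ (N - 1 - b) from by rw [← pow_add]; congr 1; omega]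
      ring
    · have h0 : x b = 0 := hsupp _ (by omega)
      rw [h0]
      push_cast
      ring
  rw [← Finset.sum_filter_ne_zero ((Finset.range (2 * N - 1)) ×ˢ (Finset.range N)),
      ← Finset.sum_filter_ne_zero ((Finset.range N) ×ˢ (Finset.range N))]
  refine Finset.sum_nbij'
    (i := fun p => if N - 1 ≤ p.1 then (p.2 + (p.1 - (N - 1)), p.2)
          else (p.2, p.2 + ((N - 1) - p.1)))
    (j := fun q => if q.2 ≤ q.1 then ((N - 1) + (q.1 - q.2), q.2)
          else ((N - 1) - (q.2 - q.1), q.1))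
    ?_ ?_ ?_ ?_ ?_
  · rintro ⟨n, i⟩ hp
    simp only [Finset.mem_filter, Finset.mem_product, Finset.mem_range] at hp
    obtain ⟨⟨hn, hi⟩, hne⟩ := hp
    have hlt : i + ((n : ℤ) - (N - 1 : ℕ)).natAbs < N := by
      by_contra h
      apply hne
      rw [hsupp _ (le_of_not_gt h)]
      push_cast
      ring
    dsimp only
    split_ifs with hc
    · simp only [Finset.mem_filter, Finset.mem_product, Finset.mem_range]
      refine ⟨⟨by omega, by omega⟩, ?_⟩
      rw [← hval1 n i _ hc hi rfl]
      exact hne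
    · simp only [Finset.mem_filter, Finset.mem_product, Finset.mem_range]
      refine ⟨⟨by omega, by omega⟩, ?_⟩
      rw [← hval2 n i _ (by omega) hi rfl]
      exact hne
  · rintro ⟨a, b⟩ hq
    simp only [Finset.mem_filter, Finset.mem_product, Finset.mem_range] at hq
    obtain ⟨⟨ha, hb⟩, hne⟩ := hq
    dsimp only
    split_ifs with hc
    · simp only [Finset.mem_filter, Finset.mem_product, Finset.mem_range]
      refine ⟨⟨by omega, by omega⟩, ?_⟩
      rw [hval1 ((N - 1) + (a - b)) b a (by omega) (by omega) (by omega)]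
      exact hne
    · simp only [Finset.mem_filter, Finset.mem_product, Finset.mem_range]
      refine ⟨⟨by omega, by omega⟩, ?_⟩
      rw [hval2 ((N - 1) - (b - a)) a b (by omega) (by omega) (by omega)]
      exact hne
  · rintro ⟨n, i⟩ hp
    simp only [Finset.mem_filter, Finset.mem_product, Finset.mem_range] at hp
    obtain ⟨⟨hn, hi⟩, -⟩ := hp
    dsimp only
    split_ifs <;> (simp only [Prod.mk.injEq, and_true, true_and] at *) <;> omega
  · rintro ⟨a, b⟩ hq
    simp only [Finset.mem_filter, Finset.mem_product, Finset.mem_range] at hq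
    obtain ⟨⟨ha, hb⟩, -⟩ := hq
    dsimp only
    split_ifs <;> (simp only [Prod.mk.injEq, and_true, true_and] at *) <;> omega
  · rintro ⟨n, i⟩ hp
    simp only [Finset.mem_filter, Finset.mem_product, Finset.mem_range] at hp
    obtain ⟨⟨hn, hi⟩, -⟩ := hp
    dsimp only
    split_ifs with hc
    · exact hval1 n i _ hc hi rfl
    · exact hval2 n i _ (by omega) hi rfl

lemma autocorr_reflect_aux (N : ℕ) (x : ℕ → ℝ) (c : ℂ) (hc : c ≠ 0) :
    c ^ (N - 1) * (∑ j ∈ Finset.range N, (x j : ℂ) * (c⁻¹) ^ (N - 1 - j))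
      = (starRingEnd ℂ) (∑ j ∈ Finset.range N, (x j : ℂ) * ((starRingEnd ℂ) c) ^ j) := by
  rw [Finset.mul_sum, map_sum]
  refine Finset.sum_congr rfl fun j hj => ?_
  simp only [Finset.mem_range] at hj
  rw [map_mul, map_pow, Complex.conj_ofReal, Complex.conj_conj, inv_pow,
      show c ^ (N - 1) = c ^ j * c ^ (N - 1 - j) from by rw [← pow_add]; congr 1; omega]
  field_simp

lemma autocorr_reflect_aux2 (N : ℕ) (x : ℕ → ℝ) (c : ℂ) (hc : c ≠ 0) :
    c ^ (N - 1) * (∑ i ∈ Finset.range N, (x i : ℂ) * (c⁻¹) ^ i)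
      = (starRingEnd ℂ) (∑ i ∈ Finset.range N, (x i : ℂ) * ((starRingEnd ℂ) c) ^ (N - 1 - i)) := by
  rw [Finset.mul_sum, map_sum]
  refine Finset.sum_congr rfl fun i hi => ?_
  simp only [Finset.mem_range] at hi
  rw [map_mul, map_pow, Complex.conj_ofReal, Complex.conj_conj, inv_pow,
      show c ^ (N - 1) = c ^ (N - 1 - i) * c ^ i from by rw [← pow_add]; congr 1; omega]
  field_simp

/-- The roots of the associated polynomial of an autocorrelation sequence occur in
pairs reflected about the unit circle: if `γ` is a root so is `1/conj γ`. -/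
theorem autocorrelation_polynomial_roots_reflected
    (N : ℕ) (hN : 1 ≤ N) (x : ℕ → ℝ) (hsupp : ∀ i, N ≤ i → x i = 0)
    (hx0 : x 0 ≠ 0) (hxN : x (N - 1) ≠ 0)
    (r : ℤ → ℝ) (hr : ∀ ℓ : ℤ, r ℓ = ∑ i ∈ Finset.range N, x i * x (i + ℓ.natAbs))
    (γ : ℂ)
    (hroot : (∑ n ∈ Finset.range (2 * N - 1), (r ((n : ℤ) - (N - 1 : ℕ)) : ℂ) * γ ^ n) = 0) :
    γ ≠ 0 ∧
      (∑ n ∈ Finset.range (2 * N - 1),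
        (r ((n : ℤ) - (N - 1 : ℕ)) : ℂ) * ((starRingEnd ℂ γ)⁻¹) ^ n) = 0 := by
  have key : ∀ w : ℂ,
      (∑ n ∈ Finset.range (2 * N - 1), (r ((n : ℤ) - (N - 1 : ℕ)) : ℂ) * w ^ n)
        = (∑ i ∈ Finset.range N, (x i : ℂ) * w ^ i) *
          (∑ j ∈ Finset.range N, (x j : ℂ) * w ^ (N - 1 - j)) := by
    intro w
    rw [← autocorr_conv_identity N hN x hsupp w]
    refine Finset.sum_congr rfl fun n _ => ?_
    rw [hr]
  rw [key] at hroot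
  have hγ : γ ≠ 0 := by
    rintro rfl
    have e1 : (∑ i ∈ Finset.range N, (x i : ℂ) * (0 : ℂ) ^ i) = (x 0 : ℂ) := by
      rw [Finset.sum_eq_single 0 (fun j _ hj => by rw [zero_pow hj]; ring)
          (fun h => absurd (Finset.mem_range.2 hN) h)]
      simp
    have e2 : (∑ j ∈ Finset.range N, (x j : ℂ) * (0 : ℂ) ^ (N - 1 - j)) = (x (N - 1) : ℂ) := by
      rw [Finset.sum_eq_single (N - 1)
          (fun j hj hjne => by
            rw [zero_pow (by simp only [Finset.mem_range] at hj; omega)]; ring)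
          (fun h => absurd (Finset.mem_range.2 (by omega)) h)]
      simp
    rw [e1, e2] at hroot
    rcases mul_eq_zero.1 hroot with h | h
    · exact hx0 (by exact_mod_cast h)
    · exact hxN (by exact_mod_cast h)
  refine ⟨hγ, ?_⟩
  have hcγ : (starRingEnd ℂ) γ ≠ 0 := by simpa using hγ
  rw [key]
  rcases mul_eq_zero.1 hroot with hX | hXr
  · have h2 := autocorr_reflect_aux N x ((starRingEnd ℂ) γ) hcγ
    rw [Complex.conj_conj] at h2
    rw [hX, map_zero] at h2
    rcases mul_eq_zero.1 h2 with h | h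
    · exact absurd h (pow_ne_zero _ hcγ)
    · rw [h]; ring
  · have h2 := autocorr_reflect_aux2 N x ((starRingEnd ℂ) γ) hcγ
    rw [Complex.conj_conj] at h2
    rw [hXr, map_zero] at h2
    rcases mul_eq_zero.1 h2 with h | h
    · exact absurd h (pow_ne_zero _ hcγ)
    · rw [h]; ring
end

section
/- Let X : Fin N × Fin N → ℝ be a real N×N matrix, x its row-wise vectorization x[mN+n] = X(m,n), and R the 2D autocorrelation: R(i,j) = Σ_{m=0}^{N-1-i} Σ_{n=0}^{N-1-j} X(m,n)X(m+i,n+j) for 0 ≤ i,j ≤ N-1. Then for ℓ = iN where 1 ≤ i ≤ N-1, the 1D autocorrelation of x satisfies r[ℓ] := Σ_{k=0}^{N²-1-ℓ} x[k]x[k+ℓ] = R(i,0). -/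
/-- For lags `ℓ = iN` with `1 ≤ i ≤ N-1`, the 1D autocorrelation of the row-wise
vectorization of `X` equals the 2D autocorrelation value `R(i,0)`. -/
theorem autocorrelation_1d_eq_2d_column_lag
    (N : ℕ) (X : ℕ → ℕ → ℝ) (x : ℕ → ℝ)
    (hx : ∀ m n, m < N → n < N → x (m * N + n) = X m n)
    (i : ℕ) (hi1 : 1 ≤ i) (hi2 : i ≤ N - 1) :
    (∑ k ∈ Finset.range (N ^ 2 - i * N), x k * x (k + i * N)) =
      ∑ m ∈ Finset.range (N - i), ∑ n ∈ Finset.range N, X m n * X (m + i) n := by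
  have hN : i < N := lt_of_le_of_lt hi2 (Nat.sub_lt (Nat.lt_of_lt_of_le (Nat.lt_of_lt_of_le Nat.zero_lt_one hi1) (le_trans hi2 (Nat.sub_le N 1))) Nat.one_pos)
  have hcard : N ^ 2 - i * N = (N - i) * N := by
    rw [Nat.sub_mul, pow_two]
  rw [hcard, ← Finset.sum_product']
  refine Finset.sum_nbij' (fun k => (k / N, k % N)) (fun p => p.1 * N + p.2) ?_ ?_ ?_ ?_ ?_
  · intro k hk
    simp only [Finset.mem_range] at hk
    have hNpos : 0 < N := by omega
    simp only [Finset.mem_product, Finset.mem_range]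
    exact ⟨Nat.div_lt_of_lt_mul (by rwa [mul_comm] at hk), Nat.mod_lt _ hNpos⟩
  · rintro ⟨m, n⟩ hp
    simp only [Finset.mem_product, Finset.mem_range] at hp ⊢
    calc m * N + n < m * N + N := by omega
    _ = (m + 1) * N := by ring
    _ ≤ (N - i) * N := Nat.mul_le_mul_right N hp.1
  · intro k hk
    have hNpos : 0 < N := by omega
    show k / N * N + k % N = k
    rw [mul_comm, Nat.div_add_mod]
  · rintro ⟨m, n⟩ hp
    simp only [Finset.mem_product, Finset.mem_range] at hp
    have hn := hp.2
    have hNpos : 0 < N := by omega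
    show ((m * N + n) / N, (m * N + n) % N) = (m, n)
    refine Prod.ext ?_ ?_ <;> simp only
    · rw [mul_comm, Nat.mul_add_div hNpos, Nat.div_eq_of_lt hn, add_zero]
    · rw [mul_comm, Nat.mul_add_mod, Nat.mod_eq_of_lt hn]
  · intro k hk
    simp only [Finset.mem_range] at hk
    have hNpos : 0 < N := by omega
    have hm : k / N < N - i := Nat.div_lt_of_lt_mul (by rwa [mul_comm] at hk)
    have hn : k % N < N := Nat.mod_lt _ hNpos
    have e1 := hx (k / N) (k % N) (by omega) hn
    rw [mul_comm, Nat.div_add_mod] at e1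
    have e2 := hx (k / N + i) (k % N) (by omega) hn
    have h1 : (k / N + i) * N + k % N = k + i * N := by
      calc (k / N + i) * N + k % N = (N * (k / N) + k % N) + i * N := by ring
      _ = k + i * N := by rw [Nat.div_add_mod]
    rw [h1] at e2
    simp only
    rw [e1, e2]
end

section
/- Let X : Fin N × Fin N → ℝ, x its row-wise vectorization x[mN+n] = X(m,n), and R its 2D autocorrelation with R(i,j) = Σ_{m=0}^{N-1-i} Σ_{n=0}^{N-1-j} X(m,n)X(m+i,n+j) for 0 ≤ i,j ≤ N-1 and R(i,j) = Σ_{m=0}^{N-1-i} Σ_{n=-j}^{N-1} X(m,n)X(m+i,n+j) for i > 0, -(N-1) ≤ j ≤ -1. Then for 0 ≤ i ≤ N-2 and 1 ≤ j ≤ N-1 with ℓ = iN + j, the 1D autocorrelation of x satisfies r[ℓ] = R(i,j) + R(i+1, j-N). -/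
private lemma split_sum (g : ℕ → ℝ) (A c j N : ℕ) (hN : c + j = N) :
    ∑ k ∈ Finset.range (A * N + c), g k
      = (∑ m ∈ Finset.range (A + 1), ∑ n ∈ Finset.range c, g (m * N + n))
        + ∑ m ∈ Finset.range A, ∑ t ∈ Finset.range j, g (m * N + c + t) := by
  subst hN
  induction A with
  | zero => simp
  | succ A ih =>
      rw [show (A + 1) * (c + j) + c = (A * (c + j) + c) + (j + c) from by ring,
        Finset.sum_range_add, ih,
        Finset.sum_range_add (fun r => g (A * (c + j) + c + r)) j c]
      have e1 : ∀ r : ℕ, A * (c + j) + c + (j + r) = (A + 1) * (c + j) + r := fun r => by ring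
      simp only [e1]
      rw [Finset.sum_range_succ (fun m => ∑ n ∈ Finset.range c, g (m * (c + j) + n)) (A + 1),
        Finset.sum_range_succ (fun m => ∑ t ∈ Finset.range j, g (m * (c + j) + c + t)) A]
      ring

/-- For lags `ℓ = iN + j` with `0 ≤ i ≤ N-2` and `1 ≤ j ≤ N-1`, the 1D autocorrelation
of the row-wise vectorization of `X` equals `R(i,j) + R(i+1, j-N)`. -/
theorem autocorrelation_1d_eq_2d_sum
    (N : ℕ) (X : ℕ → ℕ → ℝ) (x : ℕ → ℝ)
    (hx : ∀ m n, m < N → n < N → x (m * N + n) = X m n)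
    (i j : ℕ) (hi : i ≤ N - 2) (hj1 : 1 ≤ j) (hj2 : j ≤ N - 1) :
    (∑ k ∈ Finset.range (N ^ 2 - (i * N + j)), x k * x (k + (i * N + j))) =
      (∑ m ∈ Finset.range (N - i), ∑ n ∈ Finset.range (N - j),
          X m n * X (m + i) (n + j)) +
        ∑ m ∈ Finset.range (N - 1 - i), ∑ t ∈ Finset.range j,
          X m (N - j + t) * X (m + i + 1) t := by
  have hN2 : 2 ≤ N := by omega
  set A := N - 1 - i with hA
  set c := N - j with hc
  have hc' : c + j = N := by omega
  have hAi : A + i + 1 = N := by omega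
  have hM : N ^ 2 - (i * N + j) = A * N + c := by
    apply Nat.sub_eq_of_eq_add
    calc N ^ 2 = (A + i + 1) * N := by rw [hAi]; ring
    _ = (A * N + (c + j)) + (i * N + j) - j := by rw [hc']; ring_nf; omega
    _ = A * N + c + (i * N + j) := by omega
  rw [hM, split_sum (fun k => x k * x (k + (i * N + j))) A c j N hc',
    show N - i = A + 1 from by omega]
  congr 1
  · refine Finset.sum_congr rfl fun m hm => Finset.sum_congr rfl fun n hn => ?_
    simp only [Finset.mem_range] at hm hn
    have e : m * N + n + (i * N + j) = (m + i) * N + (n + j) := by ring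
    rw [e, hx m n (by omega) (by omega), hx (m + i) (n + j) (by omega) (by omega)]
  · refine Finset.sum_congr rfl fun m hm => Finset.sum_congr rfl fun t ht => ?_
    simp only [Finset.mem_range] at hm ht
    have e : m * N + c + t + (i * N + j) = (m + i + 1) * N + t := by
      calc m * N + c + t + (i * N + j) = (m + i) * N + (c + j) + t := by ring
      _ = (m + i + 1) * N + t := by rw [hc']; ring
    have e2 : m * N + c + t = m * N + (c + t) := by ring
    rw [e, e2, hx m (c + t) (by omega) (by omega),
      hx (m + i + 1) t (by omega) (by omega)]
end

section
/- Let X : Fin N × Fin N → ℝ, x its row-wise vectorization, and R its 2D autocorrelation. Then for N(N-1) < ℓ ≤ N²-1, writing ℓ = (N-1)N + j with 0 < j ≤ N-1, the 1D autocorrelation of x satisfies r[ℓ] = R(N-1, j), i.e., r[(N-1)N+j] = Σ_{n=0}^{N-1-j} X(0,n) X(N-1, n+j). -/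
/-- For lags `ℓ = (N-1)N + j` with `0 < j ≤ N-1`, the 1D autocorrelation of the
row-wise vectorization of `X` equals `R(N-1, j)`. -/
theorem autocorrelation_1d_eq_2d_last_row
    (N : ℕ) (X : ℕ → ℕ → ℝ) (x : ℕ → ℝ)
    (hx : ∀ m n, m < N → n < N → x (m * N + n) = X m n)
    (j : ℕ) (hj1 : 0 < j) (hj2 : j ≤ N - 1) :
    (∑ k ∈ Finset.range (N ^ 2 - ((N - 1) * N + j)), x k * x (k + ((N - 1) * N + j))) =
      ∑ n ∈ Finset.range (N - j), X 0 n * X (N - 1) (n + j) := by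
  have hN : 2 ≤ N := by omega
  have hrange : N ^ 2 - ((N - 1) * N + j) = N - j := by
    have : N ^ 2 = (N - 1) * N + N := by
      have : N - 1 + 1 = N := by omega
      nlinarith [this]
    omega
  rw [hrange]
  apply Finset.sum_congr rfl
  intro k hk
  rw [Finset.mem_range] at hk
  have h1 : x k = X 0 k := by
    have := hx 0 k (by omega) (by omega)
    simpa using this
  have h2 : x (k + ((N - 1) * N + j)) = X (N - 1) (k + j) := by
    have := hx (N - 1) (k + j) (by omega) (by omega)
    rw [← this]
    ring_nf
  rw [h1, h2]
end

section
/- Let p : MvPolynomial (Fin n) ℝ be a nonzero multivariate polynomial. Then the zero set {v ∈ ℝⁿ | p(v) = 0} has Lebesgue measure zero. -/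
open MeasureTheory in
/-- The zero set of a nonzero multivariate real polynomial has Lebesgue measure zero. -/
theorem polynomial_zero_set_measure_zero
    (n : ℕ) (p : MvPolynomial (Fin n) ℝ) (hp : p ≠ 0) :
    volume {v : Fin n → ℝ | MvPolynomial.eval v p = 0} = 0 := by
  induction n with
  | zero =>
    obtain ⟨c, rfl⟩ := MvPolynomial.C_surjective (Fin 0) p
    have hc : c ≠ 0 := fun h => hp (by simp [h])
    have : {v : Fin 0 → ℝ | MvPolynomial.eval v (MvPolynomial.C c) = 0} = ∅ := by
      ext v; simp [hc]
    rw [this]; exact measure_empty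
  | succ n ih =>
    set q : Polynomial (MvPolynomial (Fin n) ℝ) := MvPolynomial.finSuccEquiv ℝ n p with hqdef
    have hq0 : q ≠ 0 := by
      intro h
      apply hp
      have := congrArg (MvPolynomial.finSuccEquiv ℝ n).symm (hqdef ▸ h)
      simpa using this
    have hc : q.leadingCoeff ≠ 0 := Polynomial.leadingCoeff_ne_zero.mpr hq0
    have hN : volume {v : Fin n → ℝ | MvPolynomial.eval v q.leadingCoeff = 0} = 0 :=
      ih q.leadingCoeff hc
    -- the set in product form, with (Fin n → ℝ) first
    set T : Set ((Fin n → ℝ) × ℝ) :=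
      {vx | Polynomial.eval vx.2 (Polynomial.map (MvPolynomial.eval vx.1) q) = 0} with hTdef
    have hcont : Continuous fun vx : (Fin n → ℝ) × ℝ =>
        MvPolynomial.eval (Fin.cons vx.2 vx.1 : Fin (n+1) → ℝ) p := by
      have h1 : Continuous fun vx : (Fin n → ℝ) × ℝ =>
          (Fin.cons vx.2 vx.1 : Fin (n+1) → ℝ) := by
        apply continuous_pi
        intro i
        refine Fin.cases ?_ (fun j => ?_) i
        · simpa using continuous_snd
        · simpa [Function.comp_def] using (continuous_apply j).comp continuous_fst
      exact (MvPolynomial.continuous_eval p).comp h1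
    have hTeq : T = {vx : (Fin n → ℝ) × ℝ |
        MvPolynomial.eval (Fin.cons vx.2 vx.1 : Fin (n+1) → ℝ) p = 0} := by
      ext vx
      simp only [hTdef, Set.mem_setOf_eq, MvPolynomial.eval_eq_eval_mv_eval', hqdef]
    have hTmeas : MeasurableSet T := by
      rw [hTeq]
      exact (isClosed_eq hcont continuous_const).measurableSet
    -- T has measure zero by Fubini
    have hT0 : (volume.prod volume) T = 0 := by
      rw [MeasureTheory.Measure.measure_prod_null hTmeas]
      filter_upwards [MeasureTheory.measure_eq_zero_iff_ae_notMem.mp hN] with v hv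
      have hmap : Polynomial.map (MvPolynomial.eval v) q ≠ 0 := by
        intro h
        apply hv
        have h2 := Polynomial.coeff_map (MvPolynomial.eval v) (p := q) q.natDegree
        rw [h, Polynomial.coeff_zero] at h2
        exact h2.symm
      have hfin : Set.Finite {x : ℝ |
          Polynomial.eval x (Polynomial.map (MvPolynomial.eval v) q) = 0} :=
        Polynomial.finite_setOf_isRoot hmap
      exact hfin.measure_zero volume
    -- transfer back via measure-preserving equivalence
    have mp := MeasureTheory.measurePreserving_piFinSuccAbove
      (fun _ : Fin (n+1) => (volume : Measure ℝ)) 0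
    set e := MeasurableEquiv.piFinSuccAbove (fun _ : Fin (n+1) => ℝ) 0 with hedef
    have hS : {v : Fin (n+1) → ℝ | MvPolynomial.eval v p = 0}
        = e ⁻¹' (Prod.swap ⁻¹' T) := by
      ext v
      simp only [Set.mem_preimage, Set.mem_setOf_eq, hTeq, hedef,
        MeasurableEquiv.piFinSuccAbove_apply, Prod.swap, Fin.insertNthEquiv_zero,
        Fin.consEquiv_symm_apply, Fin.cons_self_tail]
    rw [hS]
    have hpre := mp.measure_preimage ((hTmeas.preimage measurable_swap).nullMeasurableSet)
    simp only [← MeasureTheory.volume_pi] at hpre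
    rw [hpre]
    have : (volume.prod volume) (Prod.swap ⁻¹' T) = (volume.prod volume) T := by
      rw [← MeasureTheory.Measure.prod_swap]
      rw [MeasureTheory.Measure.map_apply measurable_swap (hTmeas.preimage measurable_swap)]
      congr 1
    rw [this]
    exact hT0
end
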